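/- Let A be an m×m real symmetric matrix with m ≥ 2, let k ∈ {1,...,m}, and let B be the (m−1)×(m−1) principal submatrix of A obtained by deleting row k and column k of A. If λ_1 ≤ λ_2 ≤ ... ≤ λ_m are the eigenvalues of A and μ_1 ≤ μ_2 ≤ ... ≤ μ_{m−1} are the eigenvalues of B (each listed with multiplicity), then λ_p ≤ μ_p ≤ λ_{p+1} for every p with 1 ≤ p ≤ m−1. -/

import Mathlib

open Polynomial Matrix Finset

section CauchyAux

/-- charpoly is invariant under conjugation by a pair of mutually inverse matrices. -/
private lemma cauchy_charpoly_conj {R : Type*} [CommRing R] {m : ℕ}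
    (P M Q : Matrix (Fin m) (Fin m) R)
    (hPQ : P * Q = 1) : (P * M * Q).charpoly = M.charpoly := by
  have hQP : Q * P = 1 := mul_eq_one_comm.mp hPQ
  unfold Matrix.charpoly
  have key : charmatrix (P * M * Q) = P.map C * charmatrix M * Q.map C := by
    unfold charmatrix
    rw [_root_.map_mul, _root_.map_mul]
    rw [Matrix.mul_sub, Matrix.sub_mul]
    congr 1
    have h1 : P.map ⇑C = C.mapMatrix P := rfl
    have h2 : Q.map ⇑C = C.mapMatrix Q := rfl
    rw [h1, h2, ← Matrix.scalar_commute (X : R[X]) (fun r' => Commute.all _ _) (C.mapMatrix P),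
      mul_assoc, ← _root_.map_mul, hPQ]
    simp
  rw [key, Matrix.det_mul, Matrix.det_mul]
  have h3 : P.map ⇑C * Q.map ⇑C = 1 := by
    have : P.map ⇑C * Q.map ⇑C = C.mapMatrix (P * Q) := by
      rw [_root_.map_mul]; rfl
    rw [this, hPQ]; simp
  have hdet : (P.map ⇑C).det * (Q.map ⇑C).det = 1 := by
    rw [← Matrix.det_mul, h3, Matrix.det_one]
  calc (P.map ⇑C).det * (charmatrix M).det * (Q.map ⇑C).det
      = (charmatrix M).det * ((P.map ⇑C).det * (Q.map ⇑C).det) := by ring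
    _ = (charmatrix M).det := by rw [hdet, mul_one]

private lemma cauchy_charpoly_diagonal {m : ℕ} (d : Fin m → ℝ) :
    (Matrix.diagonal d).charpoly = ∏ i, (X - C (d i)) := by
  have h := Matrix.charpoly_of_upperTriangular (Matrix.diagonal d)
    (Matrix.blockTriangular_diagonal d)
  simpa using h

private lemma cauchy_multiset_eq_of_prod_eq {m : ℕ} (f g : Fin m → ℝ)
    (h : ∏ i, (X - C (f i)) = ∏ i, (X - C (g i))) :
    Multiset.map f univ.val = Multiset.map g univ.val := by
  have hf : (Multiset.map (fun a => X - C a) (Multiset.map f univ.val)).prod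
      = ∏ i, (X - C (f i)) := by
    rw [Multiset.map_map]; rfl
  have hg : (Multiset.map (fun a => X - C a) (Multiset.map g univ.val)).prod
      = ∏ i, (X - C (g i)) := by
    rw [Multiset.map_map]; rfl
  have := congrArg Polynomial.roots (hf.trans (h.trans hg.symm))
  rwa [roots_multiset_prod_X_sub_C, roots_multiset_prod_X_sub_C] at this

private lemma cauchy_card_subtype_eq {m : ℕ} (f g : Fin m → ℝ)
    (h : Multiset.map f univ.val = Multiset.map g univ.val)
    (P : ℝ → Prop) [DecidablePred P] :
    Fintype.card {i // P (f i)} = Fintype.card {i // P (g i)} := by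
  have := congrArg (Multiset.countP P) h
  rw [Multiset.countP_map, Multiset.countP_map] at this
  rw [Fintype.card_subtype, Fintype.card_subtype, Finset.card_def, Finset.card_def,
    Finset.filter_val, Finset.filter_val]
  simpa using this

private lemma cauchy_exists_eigen {m : ℕ} (M : Matrix (Fin m) (Fin m) ℝ) (hM : M.IsSymm)
    (lam : Fin m → ℝ) (h : M.charpoly = ∏ i, (X - C (lam i))) :
    ∃ v : Fin m → (Fin m → ℝ), ∃ eig : Fin m → ℝ,
      (∀ i j, v i ⬝ᵥ v j = if i = j then 1 else 0) ∧
      (∀ i, M *ᵥ v i = eig i • v i) ∧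
      Multiset.map eig univ.val = Multiset.map lam univ.val := by
  have hH : M.IsHermitian := by
    rwa [Matrix.IsHermitian, Matrix.conjTranspose_eq_transpose_of_trivial]
  set U : Matrix (Fin m) (Fin m) ℝ := (hH.eigenvectorUnitary : Matrix (Fin m) (Fin m) ℝ) with hU
  refine ⟨fun i => (WithLp.equiv 2 _) (hH.eigenvectorBasis i), hH.eigenvalues, ?_, ?_, ?_⟩
  · intro i j
    have := orthonormal_iff_ite.mp hH.eigenvectorBasis.orthonormal i j
    rw [← this]
    simp [PiLp.inner_apply, RCLike.inner_apply, dotProduct, starRingEnd_apply, mul_comm]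
  · intro i; exact hH.mulVec_eigenvectorBasis i
  · apply cauchy_multiset_eq_of_prod_eq
    have hsp := hH.spectral_theorem
    have hU1 : U * star U = 1 := Matrix.mem_unitaryGroup_iff.mp hH.eigenvectorUnitary.2
    have hdiag : (Matrix.diagonal (RCLike.ofReal ∘ hH.eigenvalues) : Matrix (Fin m) (Fin m) ℝ)
        = Matrix.diagonal hH.eigenvalues := by
      congr 1
    have key : M.charpoly = ∏ i, (X - C (hH.eigenvalues i)) := by
      have h2 := congrArg Matrix.charpoly hsp
      rw [hdiag, Unitary.conjStarAlgAut_apply] at h2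
      rw [h2, cauchy_charpoly_conj _ _ _ hU1, cauchy_charpoly_diagonal]
    rw [← key, ← h]

private lemma cauchy_sum_dp {m : ℕ} {ι : Type*} [Fintype ι] (f : ι → Fin m → ℝ)
    (w : Fin m → ℝ) : (∑ i, f i) ⬝ᵥ w = ∑ i, f i ⬝ᵥ w := by
  simp only [dotProduct, Finset.sum_apply, Finset.sum_mul]
  exact Finset.sum_comm

private lemma cauchy_dp_sum {m : ℕ} {ι : Type*} [Fintype ι] (f : ι → Fin m → ℝ)
    (w : Fin m → ℝ) : w ⬝ᵥ (∑ i, f i) = ∑ i, w ⬝ᵥ f i := by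
  simp only [dotProduct, Finset.sum_apply, Finset.mul_sum]
  exact Finset.sum_comm

private lemma cauchy_orth_li {m : ℕ} {ι : Type*} [Fintype ι] [DecidableEq ι]
    (v : ι → Fin m → ℝ)
    (h : ∀ i j, v i ⬝ᵥ v j = if i = j then 1 else 0) : LinearIndependent ℝ v := by
  rw [Fintype.linearIndependent_iff]
  intro g hg j
  have := congrArg (fun x => v j ⬝ᵥ x) hg
  simpa [cauchy_dp_sum, dotProduct_smul, h, mul_ite, Finset.sum_ite_eq] using this

private lemma cauchy_span_quad {m : ℕ} (M : Matrix (Fin m) (Fin m) ℝ) {ι : Type*} [Fintype ι]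
    [DecidableEq ι] (v : ι → Fin m → ℝ) (t : ι → ℝ)
    (horth : ∀ i j, v i ⬝ᵥ v j = if i = j then 1 else 0)
    (heig : ∀ i, M *ᵥ v i = t i • v i)
    (x : Fin m → ℝ) (hx : x ∈ Submodule.span ℝ (Set.range v)) :
    ∃ a : ι → ℝ, x ⬝ᵥ x = ∑ i, (a i)^2 ∧ x ⬝ᵥ (M *ᵥ x) = ∑ i, t i * (a i)^2 := by
  obtain ⟨a, ha⟩ := (Submodule.mem_span_range_iff_exists_fun ℝ).mp hx
  refine ⟨a, ?_, ?_⟩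
  · rw [← ha, cauchy_sum_dp]
    simp only [smul_dotProduct, cauchy_dp_sum, dotProduct_smul, horth]
    simp [mul_ite, Finset.sum_ite_eq, sq]
  · have hMx : M *ᵥ x = ∑ i, a i • (t i • v i) := by
      rw [← ha, ← M.mulVecLin_apply, map_sum]
      simp [heig]
    rw [hMx, ← ha, cauchy_sum_dp]
    simp only [smul_dotProduct, cauchy_dp_sum, dotProduct_smul, horth]
    simp only [smul_eq_mul, mul_ite, mul_one, mul_zero, Finset.sum_ite_eq, Finset.mem_univ,
      if_true]
    apply Finset.sum_congr rfl
    intro i _; ring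

private lemma cauchy_card_le_ge_of_monotone {m : ℕ} (f : Fin m → ℝ) (hf : Monotone f)
    (q : Fin m) :
    ↑q + 1 ≤ Fintype.card {i // f i ≤ f q} ∧ m - ↑q ≤ Fintype.card {i // f q ≤ f i} := by
  constructor
  · rw [Fintype.card_subtype]
    calc q.val + 1 = #(Iic q) := (Fin.card_Iic q).symm
    _ ≤ _ := Finset.card_le_card (fun i hi => by
        simp only [Finset.mem_Iic] at hi
        simp only [Finset.mem_filter, Finset.mem_univ, true_and]
        exact hf hi)
  · rw [Fintype.card_subtype]
    calc m - q.val = #(Ici q) := (Fin.card_Ici q).symm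
    _ ≤ _ := Finset.card_le_card (fun i hi => by
        simp only [Finset.mem_Ici] at hi
        simp only [Finset.mem_filter, Finset.mem_univ, true_and]
        exact hf hi)

private lemma cauchy_half {N : ℕ} (A : Matrix (Fin (N+1)) (Fin (N+1)) ℝ)
    (k : Fin (N+1))
    {ι κ : Type*} [Fintype ι] [DecidableEq ι] [Fintype κ] [DecidableEq κ]
    (v : ι → Fin (N+1) → ℝ) (w : κ → Fin N → ℝ) (tv : ι → ℝ) (tw : κ → ℝ) (a b : ℝ)
    (hov : ∀ i j, v i ⬝ᵥ v j = if i = j then 1 else 0)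
    (how : ∀ i j, w i ⬝ᵥ w j = if i = j then 1 else 0)
    (hev : ∀ i, A *ᵥ v i = tv i • v i)
    (hew : ∀ i, (A.submatrix k.succAbove k.succAbove) *ᵥ w i = tw i • w i)
    (htv : ∀ i, tv i ≤ a) (htw : ∀ i, b ≤ tw i)
    (hcard : N + 1 < Fintype.card ι + Fintype.card κ) :
    b ≤ a := by
  classical
  set B := A.submatrix k.succAbove k.succAbove with hBdef
  set P : Matrix (Fin (N+1)) (Fin N) ℝ :=
    Matrix.of (fun i j => if i = k.succAbove j then 1 else 0) with hPdef
  have hP0 : ∀ y : Fin N → ℝ, (P *ᵥ y) k = 0 := by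
    intro y
    have hne : ∀ j, (if k = k.succAbove j then (1:ℝ) else 0) = 0 :=
      fun j => if_neg (Fin.ne_succAbove k j)
    simp [Matrix.mulVec, dotProduct, hPdef, hne]
  have hPA : ∀ (y : Fin N → ℝ) j, (P *ᵥ y) (k.succAbove j) = y j := by
    intro y j
    simp [Matrix.mulVec, dotProduct, hPdef, Fin.succAbove_right_inj,
      ite_mul, Finset.sum_ite_eq]
  have hdp : ∀ y z : Fin N → ℝ, (P *ᵥ y) ⬝ᵥ (P *ᵥ z) = y ⬝ᵥ z := by
    intro y z
    rw [dotProduct, Fin.sum_univ_succAbove _ k]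
    simp [hP0, hPA, dotProduct]
  have hAx : ∀ (y : Fin N → ℝ) j, (A *ᵥ (P *ᵥ y)) (k.succAbove j) = (B *ᵥ y) j := by
    intro y j
    have h0 : (A *ᵥ (P *ᵥ y)) (k.succAbove j) = ∑ i, A (k.succAbove j) i * (P *ᵥ y) i := rfl
    rw [h0, Fin.sum_univ_succAbove (fun i => A (k.succAbove j) i * (P *ᵥ y) i) k,
      hP0, mul_zero, zero_add]
    show _ = ∑ i, B j i * y i
    refine Finset.sum_congr rfl fun i _ => ?_
    rw [hPA]
    rfl
  have hquad : ∀ y : Fin N → ℝ, (P *ᵥ y) ⬝ᵥ (A *ᵥ (P *ᵥ y)) = y ⬝ᵥ (B *ᵥ y) := by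
    intro y
    rw [dotProduct, Fin.sum_univ_succAbove _ k]
    simp [hP0, hPA, hAx, dotProduct]
  -- submodules
  set H : Submodule ℝ (Fin (N+1) → ℝ) :=
    LinearMap.ker (LinearMap.proj k : (Fin (N+1) → ℝ) →ₗ[ℝ] ℝ) with hHdef
  have frH : Module.finrank ℝ H = N := by
    have hsurj : Function.Surjective (LinearMap.proj k : (Fin (N+1) → ℝ) →ₗ[ℝ] ℝ) :=
      fun c => ⟨fun _ => c, rfl⟩
    have h1 := LinearMap.finrank_range_add_finrank_ker
      (LinearMap.proj k : (Fin (N+1) → ℝ) →ₗ[ℝ] ℝ)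
    rw [LinearMap.range_eq_top.mpr hsurj, finrank_top, Module.finrank_self,
      Module.finrank_fin_fun] at h1
    rw [← hHdef] at h1
    omega
  set SV := Submodule.span ℝ (Set.range v) with hSVdef
  set TW := Submodule.span ℝ (Set.range w) with hTWdef
  set S := SV ⊓ H with hSdef
  set T := Submodule.map P.mulVecLin TW with hTdef
  have frSV : Module.finrank ℝ SV = Fintype.card ι := finrank_span_eq_card (cauchy_orth_li v hov)
  have hTspan : T = Submodule.span ℝ (Set.range (fun i => P *ᵥ w i)) := by
    rw [hTdef, hTWdef, Submodule.map_span, ← Set.range_comp]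
    rfl
  have frT : Module.finrank ℝ T = Fintype.card κ := by
    rw [hTspan]
    exact finrank_span_eq_card (cauchy_orth_li _ (fun i j => by rw [hdp]; exact how i j))
  have hTH : T ≤ H := by
    rintro x ⟨y, hy, rfl⟩
    exact hP0 y
  have hSH : S ≤ H := inf_le_right
  -- dimension count
  have e1 := Submodule.finrank_sup_add_finrank_inf_eq SV H
  have e2 := Submodule.finrank_sup_add_finrank_inf_eq S T
  have le1 : Module.finrank ℝ ↥(SV ⊔ H) ≤ N + 1 := by
    have := Submodule.finrank_le (SV ⊔ H)
    rwa [Module.finrank_fin_fun] at this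
  have le2 : Module.finrank ℝ ↥(S ⊔ T) ≤ N := by
    have h := Submodule.finrank_mono (R := ℝ) (sup_le hSH hTH)
    rwa [frH] at h
  rw [frSV, frH, ← hSdef] at e1
  rw [frT] at e2
  have hST : 0 < Module.finrank ℝ ↥(S ⊓ T) := by omega
  have hSTne : S ⊓ T ≠ ⊥ := by
    intro hbot
    rw [hbot] at hST
    simp [finrank_bot] at hST
  obtain ⟨x, hxmem, hxne⟩ := Submodule.exists_mem_ne_zero_of_ne_bot hSTne
  obtain ⟨hxS, hxT⟩ := hxmem
  obtain ⟨y, hyTW, hxy⟩ := hxT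
  have hxy' : P *ᵥ y = x := hxy
  have hyne : y ≠ 0 := by
    rintro rfl
    apply hxne
    rw [← hxy']
    simp [Matrix.mulVec_zero]
  -- quadratic bounds
  obtain ⟨c, hc1, hc2⟩ := cauchy_span_quad A v tv hov hev x hxS.1
  obtain ⟨d, hd1, hd2⟩ := cauchy_span_quad B w tw how hew y hyTW
  have hq : (0:ℝ) < y ⬝ᵥ y := by
    obtain ⟨j, hj⟩ := Function.ne_iff.mp hyne
    show (0:ℝ) < ∑ i, y i * y i
    exact Finset.sum_pos' (fun i _ => mul_self_nonneg _)
      ⟨j, Finset.mem_univ j, mul_self_pos.mpr hj⟩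
  have h1 : x ⬝ᵥ (A *ᵥ x) ≤ a * (x ⬝ᵥ x) := by
    rw [hc2, hc1, Finset.mul_sum]
    exact Finset.sum_le_sum fun i _ => mul_le_mul_of_nonneg_right (htv i) (sq_nonneg _)
  have h2 : b * (y ⬝ᵥ y) ≤ y ⬝ᵥ (B *ᵥ y) := by
    rw [hd2, hd1, Finset.mul_sum]
    exact Finset.sum_le_sum fun i _ => mul_le_mul_of_nonneg_right (htw i) (sq_nonneg _)
  have hbridge1 : x ⬝ᵥ (A *ᵥ x) = y ⬝ᵥ (B *ᵥ y) := by rw [← hxy']; exact hquad y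
  have hbridge2 : x ⬝ᵥ x = y ⬝ᵥ y := by rw [← hxy']; exact hdp y y
  have hfin : b * (y ⬝ᵥ y) ≤ a * (y ⬝ᵥ y) := by
    calc b * (y ⬝ᵥ y) ≤ y ⬝ᵥ (B *ᵥ y) := h2
    _ = x ⬝ᵥ (A *ᵥ x) := hbridge1.symm
    _ ≤ a * (x ⬝ᵥ x) := h1
    _ = a * (y ⬝ᵥ y) := by rw [hbridge2]
  exact le_of_mul_le_mul_right hfin hq

end CauchyAux

/-- **Cauchy interlace theorem.** If `B` is obtained from a real symmetric
`(n+1) × (n+1)` matrix `A` (with `n + 1 ≥ 2`) by deleting row `k` and column `k`,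
and `lam`, `mu` list the eigenvalues of `A` and `B` in increasing order with
multiplicity (i.e. they are monotone and the characteristic polynomials split
accordingly), then the eigenvalues of `B` interlace those of `A`. -/
theorem cauchy_interlace_symmetric (n : ℕ) (hn : 1 ≤ n)
    (A : Matrix (Fin (n + 1)) (Fin (n + 1)) ℝ) (hA : A.IsSymm)
    (k : Fin (n + 1))
    (B : Matrix (Fin n) (Fin n) ℝ)
    (hB : B = A.submatrix k.succAbove k.succAbove)
    (lam : Fin (n + 1) → ℝ) (hlam : Monotone lam)
    (hlamEig : A.charpoly = ∏ i, (X - C (lam i)))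
    (mu : Fin n → ℝ) (hmu : Monotone mu)
    (hmuEig : B.charpoly = ∏ i, (X - C (mu i))) :
    ∀ p : Fin n, lam p.castSucc ≤ mu p ∧ mu p ≤ lam p.succ := by
  classical
  have hBsym : B.IsSymm := by
    rw [hB, Matrix.IsSymm, Matrix.transpose_submatrix, hA.eq]
  obtain ⟨v, eigA, hov, hevA, hmultA⟩ := cauchy_exists_eigen A hA lam hlamEig
  obtain ⟨w, eigB, how, hevB, hmultB⟩ := cauchy_exists_eigen B hBsym mu hmuEig
  intro p
  constructor
  · -- lam p.castSucc ≤ mu p : apply cauchy_half to -A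
    have cardι : n + 1 - ↑p ≤ Fintype.card {i // lam p.castSucc ≤ eigA i} := by
      have h1 := (cauchy_card_le_ge_of_monotone lam hlam p.castSucc).2
      have h2 : Fintype.card {i // lam p.castSucc ≤ eigA i}
          = Fintype.card {i // lam p.castSucc ≤ lam i} :=
        cauchy_card_subtype_eq eigA lam hmultA (fun x => lam p.castSucc ≤ x)
      rw [h2]
      simpa using h1
    have cardκ : ↑p + 1 ≤ Fintype.card {j // eigB j ≤ mu p} := by
      have h1 := (cauchy_card_le_ge_of_monotone mu hmu p).1
      have h2 : Fintype.card {j // eigB j ≤ mu p} = Fintype.card {j // mu j ≤ mu p} :=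
        cauchy_card_subtype_eq eigB mu hmultB (fun x => x ≤ mu p)
      rw [h2]
      exact h1
    have key := cauchy_half (-A) k
      (fun i : {i // lam p.castSucc ≤ eigA i} => v ↑i)
      (fun j : {j // eigB j ≤ mu p} => w ↑j)
      (fun i => -eigA ↑i) (fun j => -eigB ↑j) (-(lam p.castSucc)) (-(mu p))
      (fun i j => by rw [hov]; exact if_congr Subtype.coe_inj rfl rfl)
      (fun i j => by rw [how]; exact if_congr Subtype.coe_inj rfl rfl)
      (fun i => by rw [Matrix.neg_mulVec, hevA ↑i, neg_smul])
      (fun j => by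
        have : (-A).submatrix k.succAbove k.succAbove = -B := by
          rw [hB]; ext i j; simp
        rw [this, Matrix.neg_mulVec, hevB ↑j, neg_smul])
      (fun i => neg_le_neg i.2) (fun j => neg_le_neg j.2)
      (by
        have hp : (p : ℕ) < n := p.isLt
        omega)
    exact le_of_neg_le_neg key
  · -- mu p ≤ lam p.succ : apply cauchy_half to A
    have cardι : ↑p + 2 ≤ Fintype.card {i // eigA i ≤ lam p.succ} := by
      have h1 := (cauchy_card_le_ge_of_monotone lam hlam p.succ).1
      have h2 : Fintype.card {i // eigA i ≤ lam p.succ}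
          = Fintype.card {i // lam i ≤ lam p.succ} :=
        cauchy_card_subtype_eq eigA lam hmultA (fun x => x ≤ lam p.succ)
      rw [h2]
      have : ((p.succ : Fin (n+1)) : ℕ) = (p : ℕ) + 1 := rfl
      omega
    have cardκ : n - ↑p ≤ Fintype.card {j // mu p ≤ eigB j} := by
      have h1 := (cauchy_card_le_ge_of_monotone mu hmu p).2
      have h2 : Fintype.card {j // mu p ≤ eigB j} = Fintype.card {j // mu p ≤ mu j} := by
        exact cauchy_card_subtype_eq eigB mu hmultB (fun x => mu p ≤ x)
      rw [h2]
      exact h1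
    have key := cauchy_half A k
      (fun i : {i // eigA i ≤ lam p.succ} => v ↑i)
      (fun j : {j // mu p ≤ eigB j} => w ↑j)
      (fun i => eigA ↑i) (fun j => eigB ↑j) (lam p.succ) (mu p)
      (fun i j => by rw [hov]; exact if_congr Subtype.coe_inj rfl rfl)
      (fun i j => by rw [how]; exact if_congr Subtype.coe_inj rfl rfl)
      (fun i => hevA ↑i)
      (fun j => by rw [← hB]; exact hevB ↑j)
      (fun i => i.2) (fun j => j.2)
      (by
        have hp : (p : ℕ) < n := p.isLt
        omega)
    exact key
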